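/- arXiv:1805.03547 — 2 statements merged into one kernel-verified Lean document; each statement's English description precedes it below -/
import Mathlib

section
/- Let 0 < c < 1/(6+√30), and take X_1 = (1−c)(1,0), X_2 = (1−c)(−1/2, √3/2), X_3 = (1−c)(−1/2, −√3/2), with V_j and A_j = cI + V_j as in the Kaijser–Varopoulos construction (so (V_j)_{12} = x_j, (V_j)_{13} = y_j, (V_j)_{24} = x_j, (V_j)_{34} = y_j with (x_j,y_j) = X_j). Then A_1, A_2, A_3 are commuting invertible contractions on C⁴ and ‖p_V(A_1, A_2, A_3)‖ ≥ 6(1−c)² > 5 ≥ sup_{z ∈ D³}|p_V(z)|, where p_V(z) = z_1²+z_2²+z_3²−2z_1z_2−2z_2z_3−2z_3z_1. In particular, (A_1, A_2, A_3) does not satisfy von Neumann's inequality. -/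
/-- `T^α = T_1^{α_1} ⋯ T_d^{α_d}` for a (commuting) tuple in a possibly noncommutative ring. -/
noncomputable def tuplePow {d : ℕ} {R : Type*} [Monoid R] (T : Fin d → R) (α : Fin d →₀ ℕ) : R :=
  (List.ofFn fun j => T j ^ α j).prod

/-- Evaluation `p(T) = Σ_α a_α T^α` of a polynomial on a tuple of operators. -/
noncomputable def polyEval {d : ℕ} {R : Type*} [Ring R] [Algebra ℂ R] (T : Fin d → R)
    (p : MvPolynomial (Fin d) ℂ) : R :=
  (AddMonoidAlgebra.coeff p).sum fun α a => a • tuplePow T α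

/-- `sup_{z ∈ 𝔻^d} |p(z)|`, the supremum of `|p|` over the open unit polydisc. -/
noncomputable def polySup {d : ℕ} (p : MvPolynomial (Fin d) ℂ) : ℝ :=
  ⨆ z : {z : Fin d → ℂ // ∀ i, ‖z i‖ < 1}, ‖MvPolynomial.eval z.1 p‖

/-- The Kaijser–Varopoulos nilpotent `4 × 4` matrix with parameters `x, y ∈ ℝ`. -/
noncomputable def KVmatrix (x y : ℝ) : Matrix (Fin 4) (Fin 4) ℂ :=
  !![0, (x : ℂ), (y : ℂ), 0;
     0, 0, 0, (x : ℂ);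
     0, 0, 0, (y : ℂ);
     0, 0, 0, 0]

/-- The Varopoulos–Kaijser polynomial
`p_V(z) = z₁² + z₂² + z₃² − 2z₁z₂ − 2z₂z₃ − 2z₃z₁` as a formal polynomial. -/
noncomputable def pVpoly : MvPolynomial (Fin 3) ℂ :=
  MvPolynomial.X 0 ^ 2 + MvPolynomial.X 1 ^ 2 + MvPolynomial.X 2 ^ 2 -
    2 * MvPolynomial.X 0 * MvPolynomial.X 1 - 2 * MvPolynomial.X 1 * MvPolynomial.X 2 -
    2 * MvPolynomial.X 2 * MvPolynomial.X 0

/-! ### Auxiliary lemmas -/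

theorem KV.keyE (a t : ℝ) (ha : a^2 ≤ 1) (ht : t^2 ≤ 1) :
    0 ≤ 16*a^2 + 24*t^2 - 16*t^4 - 24*a*t + 32*a*t^3 - 16*a^2*t^2 := by
  rcases le_or_gt (t^2) (15/16) with h | h
  · nlinarith [sq_nonneg (4*(1-t^2)*a - 3*t + 4*t^3), mul_nonneg (sq_nonneg t) (by linarith : (0:ℝ) ≤ 15 - 16*t^2), sq_nonneg t]
  · rcases le_or_gt 0 t with h2 | h2
    · have ht1 : (0.96:ℝ) ≤ t := by nlinarith
      have key : (0:ℝ) ≤ 2*(1-t^2)*(a-1) + t*(4*t^2-3) := by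
        nlinarith [mul_nonneg (by linarith : (0:ℝ) ≤ t - 0.96) (by linarith : (0:ℝ) ≤ 4*t^2 - 3), mul_nonneg (by linarith : (0:ℝ) ≤ 1 - t^2) (by nlinarith : (0:ℝ) ≤ a + 1)]
      nlinarith [mul_nonneg (by nlinarith : (0:ℝ) ≤ a + 1) key, mul_nonneg (by nlinarith : (0:ℝ) ≤ 1 - t) (by nlinarith : (0:ℝ) ≤ 2*t^3+6*t^2+5*t+2)]
    · have ht1 : t ≤ (-0.96:ℝ) := by nlinarith
      have key : (0:ℝ) ≤ 2*(1-t^2)*(-a-1) + (-t)*(4*t^2-3) := by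
        nlinarith [mul_nonneg (by linarith : (0:ℝ) ≤ -t - 0.96) (by linarith : (0:ℝ) ≤ 4*t^2 - 3), mul_nonneg (by linarith : (0:ℝ) ≤ 1 - t^2) (by nlinarith : (0:ℝ) ≤ 1 - a)]
      nlinarith [mul_nonneg (by nlinarith : (0:ℝ) ≤ 1 - a) key, mul_nonneg (by nlinarith : (0:ℝ) ≤ 1 + t) (by nlinarith : (0:ℝ) ≤ -2*t^3+6*t^2-5*t+2)]

theorem KV.normsq (a b t s : ℝ) (h1 : a^2+b^2 = 1) (h2 : t^2+s^2 = 1) :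
    (a^2-b^2-4*t*a-4*s^2)^2 + (2*a*b-4*t*b)^2 ≤ 25 := by
  have hE := KV.keyE a t (by nlinarith) (by nlinarith)
  have h1' : a^2+b^2-1 = 0 := by linarith
  have h2' : t^2+s^2-1 = 0 := by linarith
  have hu : (a^2-b^2-4*t*a-4*s^2)^2 + (2*a*b-4*t*b)^2 =
      25 - (16*a^2+24*t^2-16*t^4-24*a*t+32*a*t^3-16*a^2*t^2)
      + (4*(a-2*t)^2 - ((a^2-b^2-4*t*a-4*s^2)+(2*a^2-4*t*a+4*t^2-5))) * (a^2+b^2-1)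
      + (-4*((a^2-b^2-4*t*a-4*s^2)+(2*a^2-4*t*a+4*t^2-5))) * (t^2+s^2-1) := by ring
  rw [h1', h2'] at hu
  simp at hu
  linarith

lemma KV.normsq' (z : ℂ) : ‖z‖^2 = z.re^2 + z.im^2 := by
  rw [Complex.sq_norm, Complex.normSq_apply]; ring

lemma KV.circ (w : ℂ) (t s : ℝ) (hw : ‖w‖ = 1) (hts : t^2+s^2 = 1) :
    ‖w^2 - 4*(t:ℂ)*w - 4*(s:ℂ)^2‖ ≤ 5 := by
  have h1 : w.re^2 + w.im^2 = 1 := by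
    have := KV.normsq' w
    rw [hw] at this
    linarith [this.symm]
  have hre : (w^2 - 4*(t:ℂ)*w - 4*(s:ℂ)^2).re = w.re^2 - w.im^2 - 4*t*w.re - 4*s^2 := by
    simp [pow_two, Complex.mul_re, Complex.mul_im]
  have him : (w^2 - 4*(t:ℂ)*w - 4*(s:ℂ)^2).im = 2*w.re*w.im - 4*t*w.im := by
    simp [pow_two, Complex.mul_re, Complex.mul_im]
    ring
  have := KV.normsq w.re w.im t s h1 hts
  have hn := KV.normsq' (w^2 - 4*(t:ℂ)*w - 4*(s:ℂ)^2)
  rw [hre, him] at hn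
  nlinarith [norm_nonneg (w^2 - 4*(t:ℂ)*w - 4*(s:ℂ)^2)]

lemma KV.torus (z1 z2 z3 : ℂ) (h1 : ‖z1‖ = 1) (h2 : ‖z2‖ = 1) (h3 : ‖z3‖ = 1) :
    ‖z1^2+z2^2+z3^2 - 2*z1*z2 - 2*z2*z3 - 2*z3*z1‖ ≤ 5 := by
  have hconj : ∀ z : ℂ, ‖z‖ = 1 → z * (starRingEnd ℂ) z = 1 := by
    intro z hz
    rw [Complex.mul_conj]
    norm_cast
    rw [Complex.normSq_eq_norm_sq, hz]; norm_num
  obtain ⟨η, hη⟩ := IsAlgClosed.exists_pow_nat_eq ((starRingEnd ℂ) z1 * z2) (n := 2) (by norm_num)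
  have hun : ‖(starRingEnd ℂ) z1 * z2‖ = 1 := by simp [h1, h2]
  have hηn : ‖η‖ = 1 := by
    have : ‖η‖^2 = 1 := by rw [← norm_pow, hη, hun]
    nlinarith [norm_nonneg η]
  obtain ⟨t, s, hrei⟩ : ∃ t s : ℝ, (t:ℂ) + (s:ℂ)*Complex.I = η := ⟨η.re, η.im, Complex.re_add_im η⟩
  have hts : t^2 + s^2 = 1 := by
    have h := KV.normsq' η
    rw [hηn, ← hrei] at h
    simpa using h.symm
  obtain ⟨w, hwdef⟩ : ∃ w, w = (starRingEnd ℂ) η * ((starRingEnd ℂ) z1 * z3) := ⟨_, rfl⟩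
  have hwn : ‖w‖ = 1 := by simp [hwdef, hηn, h1, h3]
  have ha := hconj z1 h1
  have hb := hconj η hηn
  have hz2 : z2 = z1 * η^2 := by
    linear_combination (-z1) * hη + (-z2) * ha
  have hz3 : z3 = z1 * (η * w) := by
    rw [hwdef]
    linear_combination (-z3*η*(starRingEnd ℂ) η) * ha + (-z3) * hb
  have htsC : (t:ℂ)^2 + (s:ℂ)^2 = 1 := by
    norm_cast
  have e1 : (1:ℂ) + η^2 = 2*(t:ℂ)*η := by
    rw [← hrei]
    linear_combination (-1:ℂ)*htsC + (s:ℂ)^2*Complex.I_sq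
  have hminus : (1:ℂ) - η^2 = -2*(s:ℂ)*Complex.I*η := by
    rw [← hrei]
    linear_combination (-1:ℂ)*htsC + (s:ℂ)^2*Complex.I_sq
  have e2 : ((1:ℂ) - η^2)^2 = -4*(s:ℂ)^2*η^2 := by
    rw [hminus]
    linear_combination 4*(s:ℂ)^2*η^2*Complex.I_sq
  have hP : z1^2+z2^2+z3^2 - 2*z1*z2 - 2*z2*z3 - 2*z3*z1 =
      z1^2 * η^2 * (w^2 - 4*(t:ℂ)*w - 4*(s:ℂ)^2) := by
    rw [hz2, hz3]
    linear_combination z1^2 * e2 - 2*z1^2*η*w*e1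
  rw [hP, norm_mul, norm_mul, norm_pow, norm_pow, h1, hηn]
  simpa using KV.circ w t s hwn hts

lemma KV.step (F : ℂ → ℂ) (hF : Differentiable ℂ F) (h : ∀ z, ‖z‖ = 1 → ‖F z‖ ≤ 5) :
    ∀ z, ‖z‖ ≤ 1 → ‖F z‖ ≤ 5 := by
  intro z hz
  refine Complex.norm_le_of_forall_mem_frontier_norm_le (U := Metric.ball 0 1)
    Metric.isBounded_ball hF.diffContOnCl ?_ ?_
  · intro w hw
    rw [frontier_ball (0:ℂ) one_ne_zero] at hw
    apply h
    simpa using hw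
  · rw [closure_ball (0:ℂ) one_ne_zero]
    simpa using hz

lemma KV.disc_bound (z1 z2 z3 : ℂ) (h1 : ‖z1‖ ≤ 1) (h2 : ‖z2‖ ≤ 1) (h3 : ‖z3‖ ≤ 1) :
    ‖z1^2+z2^2+z3^2 - 2*z1*z2 - 2*z2*z3 - 2*z3*z1‖ ≤ 5 := by
  have B1 : ∀ z2 z3 : ℂ, ‖z2‖ = 1 → ‖z3‖ = 1 → ∀ z, ‖z‖ ≤ 1 →
      ‖z^2+z2^2+z3^2 - 2*z*z2 - 2*z2*z3 - 2*z3*z‖ ≤ 5 := by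
    intro z2 z3 hh2 hh3
    exact KV.step _ (by fun_prop) (fun z hz => KV.torus z z2 z3 hz hh2 hh3)
  have B2 : ∀ z3 : ℂ, ‖z3‖ = 1 → ∀ z1, ‖z1‖ ≤ 1 → ∀ z, ‖z‖ ≤ 1 →
      ‖z1^2+z^2+z3^2 - 2*z1*z - 2*z*z3 - 2*z3*z1‖ ≤ 5 := by
    intro z3 hh3 z1 hz1
    exact KV.step _ (by fun_prop) (fun z hz => B1 z z3 hz hh3 z1 hz1)
  have B3 : ∀ z, ‖z‖ ≤ 1 →
      ‖z1^2+z2^2+z^2 - 2*z1*z2 - 2*z2*z - 2*z*z1‖ ≤ 5 := by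
    exact KV.step _ (by fun_prop) (fun z hz => B2 z hz z1 h1 z2 h2)
  exact B3 z3 h3

lemma KV.explicit (c a b : ℝ) : (c : ℂ) • (1 : Matrix (Fin 4) (Fin 4) ℂ) + KVmatrix a b =
    !![(c:ℂ), a, b, 0; 0, c, 0, a; 0, 0, c, b; 0, 0, 0, c] := by
  ext i j
  fin_cases i <;> fin_cases j <;> simp [KVmatrix, Matrix.one_apply, Matrix.vecHead, Matrix.vecTail]

lemma KV.comm (c a b a' b' : ℝ) :
    (!![(c:ℂ), a, b, 0; 0, c, 0, a; 0, 0, c, b; 0, 0, 0, c] : Matrix (Fin 4) (Fin 4) ℂ) *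
      !![(c:ℂ), a', b', 0; 0, c, 0, a'; 0, 0, c, b'; 0, 0, 0, c] =
    !![(c:ℂ), a', b', 0; 0, c, 0, a'; 0, 0, c, b'; 0, 0, 0, c] *
      !![(c:ℂ), a, b, 0; 0, c, 0, a; 0, 0, c, b; 0, 0, 0, c] := by
  ext i j
  fin_cases i <;> fin_cases j <;>
    simp [Matrix.mul_apply, Fin.sum_univ_four, Matrix.vecHead, Matrix.vecTail] <;> ring

lemma KV.det (c a b : ℝ) :
    (!![(c:ℂ), a, b, 0; 0, c, 0, a; 0, 0, c, b; 0, 0, 0, c] : Matrix (Fin 4) (Fin 4) ℂ).det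
      = (c:ℂ)^4 := by
  simp [Matrix.det_succ_row_zero, Fin.sum_univ_succ, Matrix.vecHead, Matrix.vecTail]
  ring

lemma KV.CS2 (x y : ℝ) (u w : ℂ) :
    ‖(x:ℂ)*u + (y:ℂ)*w‖^2 ≤ (x^2+y^2)*(‖u‖^2+‖w‖^2) := by
  simp only [KV.normsq', Complex.add_re, Complex.add_im, Complex.mul_re, Complex.mul_im,
    Complex.ofReal_re, Complex.ofReal_im]
  nlinarith [sq_nonneg (x*w.re - y*u.re), sq_nonneg (x*w.im - y*u.im)]

lemma KV.euclid_norm_sq (u : EuclideanSpace ℂ (Fin 4)) :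
    ‖u‖^2 = ‖u 0‖^2 + ‖u 1‖^2 + ‖u 2‖^2 + ‖u 3‖^2 := by
  rw [EuclideanSpace.norm_eq, Real.sq_sqrt (by positivity)]
  simp [Fin.sum_univ_four]

lemma KV.opnorm (a b : ℝ) :
    ‖Matrix.toEuclideanCLM (𝕜 := ℂ) (KVmatrix a b)‖ ≤ Real.sqrt (a^2+b^2) := by
  apply ContinuousLinearMap.opNorm_le_bound _ (Real.sqrt_nonneg _)
  intro v
  have hv : (Matrix.toEuclideanCLM (𝕜 := ℂ) (KVmatrix a b)) v =
      (WithLp.equiv 2 _).symm ((KVmatrix a b).mulVec (WithLp.equiv 2 _ v)) := by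
    have := Matrix.toEuclideanCLM_toLp (𝕜 := ℂ) (KVmatrix a b) (WithLp.equiv 2 _ v)
    simpa [Matrix.toLin'_apply] using this
  have hcoord : ∀ i, ((WithLp.equiv 2 _).symm ((KVmatrix a b).mulVec (WithLp.equiv 2 _ v)) :
      EuclideanSpace ℂ (Fin 4)) i = (KVmatrix a b).mulVec (WithLp.equiv 2 _ v) i := fun i => rfl
  have h0 : (KVmatrix a b).mulVec (WithLp.equiv 2 _ v) 0 = (a:ℂ) * v 1 + (b:ℂ) * v 2 := by
    simp [Matrix.mulVec, dotProduct, KVmatrix, Fin.sum_univ_four, Matrix.vecHead,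
      Matrix.vecTail]
  have h1 : (KVmatrix a b).mulVec (WithLp.equiv 2 _ v) 1 = (a:ℂ) * v 3 := by
    simp [Matrix.mulVec, dotProduct, KVmatrix, Fin.sum_univ_four, Matrix.vecHead,
      Matrix.vecTail]
  have h2 : (KVmatrix a b).mulVec (WithLp.equiv 2 _ v) 2 = (b:ℂ) * v 3 := by
    simp [Matrix.mulVec, dotProduct, KVmatrix, Fin.sum_univ_four, Matrix.vecHead,
      Matrix.vecTail]
  have h3 : (KVmatrix a b).mulVec (WithLp.equiv 2 _ v) 3 = 0 := by
    simp [Matrix.mulVec, dotProduct, KVmatrix, Fin.sum_univ_four, Matrix.vecHead,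
      Matrix.vecTail]
  have hsq : ‖(Matrix.toEuclideanCLM (𝕜 := ℂ) (KVmatrix a b)) v‖^2 ≤ (a^2+b^2) * ‖v‖^2 := by
    rw [hv, KV.euclid_norm_sq]
    rw [hcoord 0, hcoord 1, hcoord 2, hcoord 3, h0, h1, h2, h3]
    have e1 := KV.CS2 a b (v 1) (v 2)
    have e2 : ‖(a:ℂ) * v 3‖^2 = a^2 * ‖v 3‖^2 := by
      rw [norm_mul, mul_pow, Complex.norm_real, Real.norm_eq_abs, sq_abs]
    have e3 : ‖(b:ℂ) * v 3‖^2 = b^2 * ‖v 3‖^2 := by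
      rw [norm_mul, mul_pow, Complex.norm_real, Real.norm_eq_abs, sq_abs]
    have e4 := KV.euclid_norm_sq v
    have e5 : (0:ℝ) ≤ ‖v 0‖^2 := sq_nonneg _
    simp only [norm_zero]
    nlinarith [sq_nonneg (a * ‖v 1‖), sq_nonneg (v 3).re]
  calc ‖(Matrix.toEuclideanCLM (𝕜 := ℂ) (KVmatrix a b)) v‖
      = Real.sqrt (‖(Matrix.toEuclideanCLM (𝕜 := ℂ) (KVmatrix a b)) v‖^2) :=
        (Real.sqrt_sq (norm_nonneg _)).symm
    _ ≤ Real.sqrt ((a^2+b^2) * ‖v‖^2) := Real.sqrt_le_sqrt hsq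
    _ = Real.sqrt (a^2+b^2) * ‖v‖ := by
        rw [Real.sqrt_mul (by positivity), Real.sqrt_sq (norm_nonneg _)]

open MvPolynomial in
lemma KV.pV_decomp : pVpoly =
    monomial (Finsupp.single 0 2) 1 + monomial (Finsupp.single 1 2) 1 +
    monomial (Finsupp.single 2 2) 1 +
    monomial (Finsupp.single 0 1 + Finsupp.single 1 1) (-2) +
    monomial (Finsupp.single 1 1 + Finsupp.single 2 1) (-2) +
    monomial (Finsupp.single 2 1 + Finsupp.single 0 1) (-2) := by
  have h2 : (2 : MvPolynomial (Fin 3) ℂ) = C (2:ℂ) := (map_ofNat C 2).symm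
  rw [pVpoly]
  rw [show (2 : MvPolynomial (Fin 3) ℂ) * X 0 * X 1 = monomial (Finsupp.single 0 1 + Finsupp.single 1 1) 2 by
    rw [mul_assoc, X, X, monomial_mul, h2, C_mul_monomial]; norm_num]
  rw [show (2 : MvPolynomial (Fin 3) ℂ) * X 1 * X 2 = monomial (Finsupp.single 1 1 + Finsupp.single 2 1) 2 by
    rw [mul_assoc, X, X, monomial_mul, h2, C_mul_monomial]; norm_num]
  rw [show (2 : MvPolynomial (Fin 3) ℂ) * X 2 * X 0 = monomial (Finsupp.single 2 1 + Finsupp.single 0 1) 2 by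
    rw [mul_assoc, X, X, monomial_mul, h2, C_mul_monomial]; norm_num]
  rw [X_pow_eq_monomial, X_pow_eq_monomial, X_pow_eq_monomial]
  simp only [show ∀ m : Fin 3 →₀ ℕ, (monomial m (-2 : ℂ)) = -(monomial m 2) from
    fun m => by simp [map_neg]]
  ring

lemma KV.polyEval_add {d : ℕ} {R : Type*} [Ring R] [Algebra ℂ R] (T : Fin d → R)
    (p q : MvPolynomial (Fin d) ℂ) :
    polyEval T (p + q) = polyEval T p + polyEval T q := by
  unfold polyEval
  exact Finsupp.sum_add_index' (f := AddMonoidAlgebra.coeff p) (g := AddMonoidAlgebra.coeff q)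
    (h := fun α a => a • tuplePow T α) (fun α => by simp) (fun α a b => add_smul a b _)

lemma KV.polyEval_monomial {d : ℕ} {R : Type*} [Ring R] [Algebra ℂ R] (T : Fin d → R)
    (α : Fin d →₀ ℕ) (a : ℂ) :
    polyEval T (MvPolynomial.monomial α a) = a • tuplePow T α := by
  unfold polyEval
  exact MvPolynomial.sum_monomial_eq (b := fun α a => a • tuplePow T α) (by simp)

lemma KV.tuplePow3 {R : Type*} [Monoid R] (T : Fin 3 → R) (α : Fin 3 →₀ ℕ) :
    tuplePow T α = T 0 ^ α 0 * (T 1 ^ α 1 * (T 2 ^ α 2 * 1)) := by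
  simp [tuplePow, List.ofFn_succ]

lemma KV.polyEval_pV {R : Type*} [Ring R] [Algebra ℂ R] (T : Fin 3 → R) :
    polyEval T pVpoly = T 0^2 + T 1^2 + T 2^2
      - (2:ℂ) • (T 0 * T 1) - (2:ℂ) • (T 1 * T 2) - (2:ℂ) • (T 0 * T 2) := by
  rw [KV.pV_decomp]
  rw [KV.polyEval_add, KV.polyEval_add, KV.polyEval_add, KV.polyEval_add, KV.polyEval_add]
  rw [KV.polyEval_monomial, KV.polyEval_monomial, KV.polyEval_monomial, KV.polyEval_monomial,
    KV.polyEval_monomial, KV.polyEval_monomial]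
  simp only [KV.tuplePow3, Finsupp.add_apply, Finsupp.single_apply, Fin.ext_iff, Fin.val_zero,
    Fin.val_one, Fin.val_two]
  norm_num
  simp [sub_eq_add_neg]

set_option maxHeartbeats 2000000 in
/-- For `0 < c < 1/(6+√30)` and `X₁ = (1−c)(1,0)`,
`X₂ = (1−c)(−1/2, √3/2)`, `X₃ = (1−c)(−1/2, −√3/2)`, the matrices `A_j = cI + V_j` of the
Kaijser–Varopoulos construction are commuting invertible contractions on `ℂ⁴`, and
`‖p_V(A₁,A₂,A₃)‖ ≥ 6(1−c)² > 5 ≥ sup_{z∈𝔻³}|p_V(z)|`. In particular `(A₁,A₂,A₃)` does not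
satisfy von Neumann's inequality. -/
theorem KV_counterexample (c : ℝ) (hc : 0 < c) (hc' : c < 1 / (6 + Real.sqrt 30))
    (x y : Fin 3 → ℝ)
    (hx : x = ![1 - c, (1 - c) * (-1 / 2), (1 - c) * (-1 / 2)])
    (hy : y = ![0, (1 - c) * (Real.sqrt 3 / 2), (1 - c) * (-(Real.sqrt 3) / 2)])
    (A : Fin 3 → Matrix (Fin 4) (Fin 4) ℂ)
    (hA : ∀ j, A j = (c : ℂ) • (1 : Matrix (Fin 4) (Fin 4) ℂ) + KVmatrix (x j) (y j)) :
    (∀ j k, A j * A k = A k * A j) ∧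
    (∀ j, IsUnit (A j)) ∧
    (∀ j, ‖Matrix.toEuclideanCLM (𝕜 := ℂ) (A j)‖ ≤ 1) ∧
    ‖polyEval (fun j => Matrix.toEuclideanCLM (𝕜 := ℂ) (A j)) pVpoly‖ ≥ 6 * (1 - c) ^ 2 ∧
    6 * (1 - c) ^ 2 > 5 ∧
    (5 : ℝ) ≥ polySup pVpoly ∧
    ¬ (∀ p : MvPolynomial (Fin 3) ℂ,
        ‖polyEval (fun j => Matrix.toEuclideanCLM (𝕜 := ℂ) (A j)) p‖ ≤ polySup p) := by
  have h30 : Real.sqrt 30 ^ 2 = 30 := Real.sq_sqrt (by norm_num)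
  have h30' : 0 ≤ Real.sqrt 30 := Real.sqrt_nonneg 30
  have h30'' : 5 < Real.sqrt 30 := by nlinarith
  have hden : (0:ℝ) < 6 + Real.sqrt 30 := by linarith
  have hkey : c * (6 + Real.sqrt 30) < 1 := by
    rw [lt_div_iff₀ hden] at hc'
    exact hc'
  have hc1 : c < 1/11 := by nlinarith
  have h3 : Real.sqrt 3 ^ 2 = 3 := Real.sq_sqrt (by norm_num)
  have h3' : 0 ≤ Real.sqrt 3 := Real.sqrt_nonneg 3
  -- explicit form of the matrices
  have hAe : ∀ j, A j = !![(c:ℂ), x j, y j, 0; 0, c, 0, x j; 0, 0, c, y j; 0, 0, 0, c] :=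
    fun j => by rw [hA j, KV.explicit]
  -- Part 1: commutation
  have part1 : ∀ j k, A j * A k = A k * A j := by
    intro j k
    rw [hAe j, hAe k, KV.comm]
  -- Part 2: invertibility
  have part2 : ∀ j, IsUnit (A j) := by
    intro j
    rw [Matrix.isUnit_iff_isUnit_det, hAe j, KV.det]
    exact (isUnit_iff_ne_zero).2 (pow_ne_zero _ (by exact_mod_cast hc.ne'))
  -- Part 3: contraction
  have part3 : ∀ j, ‖Matrix.toEuclideanCLM (𝕜 := ℂ) (A j)‖ ≤ 1 := by
    intro j
    have hxy : (x j)^2 + (y j)^2 = (1-c)^2 := by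
      fin_cases j <;> simp [hx, hy] <;> nlinarith
    have hsplit : Matrix.toEuclideanCLM (𝕜 := ℂ) (A j) =
        (c:ℂ) • (1 : EuclideanSpace ℂ (Fin 4) →L[ℂ] EuclideanSpace ℂ (Fin 4)) +
          Matrix.toEuclideanCLM (𝕜 := ℂ) (KVmatrix (x j) (y j)) := by
      rw [hA j, map_add, map_smul, map_one]
    rw [hsplit]
    calc ‖(c:ℂ) • (1 : EuclideanSpace ℂ (Fin 4) →L[ℂ] EuclideanSpace ℂ (Fin 4)) +
          Matrix.toEuclideanCLM (𝕜 := ℂ) (KVmatrix (x j) (y j))‖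
        ≤ ‖(c:ℂ) • (1 : EuclideanSpace ℂ (Fin 4) →L[ℂ] EuclideanSpace ℂ (Fin 4))‖ +
          ‖Matrix.toEuclideanCLM (𝕜 := ℂ) (KVmatrix (x j) (y j))‖ := norm_add_le _ _
      _ ≤ c + (1 - c) := by
          gcongr
          · rw [norm_smul (c:ℂ) (1 : EuclideanSpace ℂ (Fin 4) →L[ℂ] EuclideanSpace ℂ (Fin 4))]
            simp [ContinuousLinearMap.norm_id, ContinuousLinearMap.one_def,
              abs_of_nonneg hc.le]
          · calc ‖Matrix.toEuclideanCLM (𝕜 := ℂ) (KVmatrix (x j) (y j))‖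
                ≤ Real.sqrt ((x j)^2 + (y j)^2) := KV.opnorm _ _
              _ = 1 - c := by rw [hxy, Real.sqrt_sq (by linarith)]
      _ = 1 := by ring
  -- Part 4: lower bound for the norm
  have part4 : ‖polyEval (fun j => Matrix.toEuclideanCLM (𝕜 := ℂ) (A j)) pVpoly‖
      ≥ 6 * (1 - c) ^ 2 := by
    have hTeval := KV.polyEval_pV (fun j => Matrix.toEuclideanCLM (𝕜 := ℂ) (A j))
    have hmap : polyEval (fun j => Matrix.toEuclideanCLM (𝕜 := ℂ) (A j)) pVpoly =
        Matrix.toEuclideanCLM (𝕜 := ℂ) (A 0^2 + A 1^2 + A 2^2 - (2:ℂ)•(A 0*A 1)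
          - (2:ℂ)•(A 1*A 2) - (2:ℂ)•(A 0*A 2)) := by
      rw [hTeval]
      simp only [map_sub, map_add, map_pow, map_mul, map_smul]
    have hent : ∀ j k, (A j * A k) 0 3 = (x j : ℂ) * (x k) + (y j : ℂ) * (y k) := by
      intro j k
      rw [hAe j, hAe k]
      simp [Matrix.mul_apply, Fin.sum_univ_four, Matrix.vecHead, Matrix.vecTail]
    have hM03 : (A 0^2 + A 1^2 + A 2^2 - (2:ℂ)•(A 0*A 1) - (2:ℂ)•(A 1*A 2)
        - (2:ℂ)•(A 0*A 2)) 0 3 = ((6*(1-c)^2 : ℝ) : ℂ) := by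
      have h3C : ((Real.sqrt 3 : ℂ))^2 = 3 := by exact_mod_cast h3
      simp only [Matrix.sub_apply, Matrix.add_apply, Matrix.smul_apply, pow_two, hent]
      simp only [hx, hy]
      simp only [Matrix.cons_val_zero, Matrix.cons_val_one, Matrix.head_cons,
        Matrix.cons_val_two, Matrix.tail_cons, smul_eq_mul]
      push_cast
      linear_combination ((1-(c:ℂ))^2) * h3C
    set M := A 0^2 + A 1^2 + A 2^2 - (2:ℂ)•(A 0*A 1) - (2:ℂ)•(A 1*A 2) - (2:ℂ)•(A 0*A 2)
      with hMdef
    have happ : (Matrix.toEuclideanCLM (𝕜 := ℂ) M) (EuclideanSpace.single (3 : Fin 4) (1:ℂ)) =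
        (WithLp.equiv 2 _).symm (M.mulVec (Pi.single 3 1)) := by
      have hsingle : EuclideanSpace.single (3 : Fin 4) (1:ℂ)
          = (WithLp.equiv 2 (Fin 4 → ℂ)).symm (Pi.single 3 1) := rfl
      have h := Matrix.toEuclideanCLM_toLp (𝕜 := ℂ) M (Pi.single 3 1)
      rw [hsingle, WithLp.equiv_symm_apply, h]
    have hcoord0 : ((Matrix.toEuclideanCLM (𝕜 := ℂ) M)
        (EuclideanSpace.single (3 : Fin 4) (1:ℂ)) : EuclideanSpace ℂ (Fin 4)) 0 = M 0 3 := by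
      rw [happ]
      show M.mulVec (Pi.single 3 1) 0 = M 0 3
      rw [Matrix.mulVec_single]
      simp
    have hcle : ∀ u : EuclideanSpace ℂ (Fin 4), ‖u 0‖ ≤ ‖u‖ := by
      intro u
      have := KV.euclid_norm_sq u
      nlinarith [norm_nonneg u, norm_nonneg (u 0), sq_nonneg ‖u 1‖, sq_nonneg ‖u 2‖,
        sq_nonneg ‖u 3‖]
    have hn1 : ‖((Matrix.toEuclideanCLM (𝕜 := ℂ) M)
        (EuclideanSpace.single (3 : Fin 4) (1:ℂ)) : EuclideanSpace ℂ (Fin 4)) 0‖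
        = 6*(1-c)^2 := by
      rw [hcoord0, hM03, Complex.norm_real, Real.norm_eq_abs, abs_of_nonneg (by positivity)]
    have hn2 : ‖(Matrix.toEuclideanCLM (𝕜 := ℂ) M)
        (EuclideanSpace.single (3 : Fin 4) (1:ℂ))‖ ≤ ‖Matrix.toEuclideanCLM (𝕜 := ℂ) M‖ := by
      calc ‖(Matrix.toEuclideanCLM (𝕜 := ℂ) M) (EuclideanSpace.single (3 : Fin 4) (1:ℂ))‖
          ≤ ‖Matrix.toEuclideanCLM (𝕜 := ℂ) M‖ * ‖EuclideanSpace.single (3 : Fin 4) (1:ℂ)‖ :=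
            ContinuousLinearMap.le_opNorm _ _
        _ = ‖Matrix.toEuclideanCLM (𝕜 := ℂ) M‖ := by
            rw [EuclideanSpace.norm_single]
            simp
    rw [hmap]
    calc 6*(1-c)^2 = ‖((Matrix.toEuclideanCLM (𝕜 := ℂ) M)
          (EuclideanSpace.single (3 : Fin 4) (1:ℂ)) : EuclideanSpace ℂ (Fin 4)) 0‖ := hn1.symm
      _ ≤ ‖(Matrix.toEuclideanCLM (𝕜 := ℂ) M) (EuclideanSpace.single (3 : Fin 4) (1:ℂ))‖ :=
          hcle _
      _ ≤ ‖Matrix.toEuclideanCLM (𝕜 := ℂ) M‖ := hn2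
  -- Part 5
  have part5 : 6 * (1 - c) ^ 2 > 5 := by
    have haux : 5 + Real.sqrt 30 < (6 + Real.sqrt 30) * (1 - c) := by nlinarith
    have haux2 : (5 + Real.sqrt 30)^2 < ((6 + Real.sqrt 30) * (1 - c))^2 :=
      pow_lt_pow_left₀ haux (by linarith) (by norm_num)
    nlinarith [haux2, h30, h30', sq_nonneg (6 + Real.sqrt 30)]
  -- Part 6
  have part6 : (5 : ℝ) ≥ polySup pVpoly := by
    have hne : Nonempty {z : Fin 3 → ℂ // ∀ i, ‖z i‖ < 1} := ⟨⟨fun _ => 0, fun i => by simp⟩⟩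
    rw [ge_iff_le, polySup]
    refine ciSup_le ?_
    rintro ⟨z, hz⟩
    have hb := KV.disc_bound (z 0) (z 1) (z 2) (hz 0).le (hz 1).le (hz 2).le
    have he : MvPolynomial.eval z pVpoly =
        (z 0)^2+(z 1)^2+(z 2)^2 - 2*(z 0)*(z 1) - 2*(z 1)*(z 2) - 2*(z 2)*(z 0) := by
      simp [pVpoly]
    rw [he]
    simpa [mul_comm] using hb
  -- Part 7
  refine ⟨part1, part2, part3, part4, part5, part6, fun h => ?_⟩
  have h5 := h pVpoly
  linarith
end

section
/- Let B = (B_1, ..., B_d) be a commuting d-tuple of contractions on a Hilbert space K such that there is a unital multiplicative linear functional χ on the unital Banach algebra generated by B_1, ..., B_d with χ(B_j) = 1 for all j. Then for any commuting d-tuple A of bounded operators on a Hilbert space H and any polynomial p in d variables, ‖p(A ⊗ B)‖ ≥ ‖p(A)‖, where A ⊗ B = (A_1 ⊗ B_1, ..., A_d ⊗ B_d). -/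
set_option linter.unusedSectionVars false
set_option linter.unusedVariables false
set_option maxHeartbeats 2000000
set_option synthInstance.maxHeartbeats 400000

section Aux

lemma polyEval_eq {d : ℕ} {R : Type*} [Ring R] [Algebra ℂ R] (T : Fin d → R)
    (p : MvPolynomial (Fin d) ℂ) :
    polyEval T p = ∑ α ∈ p.support, MvPolynomial.coeff α p • tuplePow T α := rfl

variable {K : Type*} [NormedAddCommGroup K] [InnerProductSpace ℂ K] [CompleteSpace K]

lemma pow_norm_le_one (T : K →L[ℂ] K) (h : ‖T‖ ≤ 1) : ∀ n, ‖T ^ n‖ ≤ 1 := by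
  intro n
  induction n with
  | zero => simpa [pow_zero, ContinuousLinearMap.one_def] using ContinuousLinearMap.norm_id_le
  | succ n ih =>
      calc ‖T ^ (n+1)‖ = ‖T ^ n * T‖ := by rw [pow_succ]
        _ ≤ ‖T ^ n‖ * ‖T‖ := norm_mul_le _ _
        _ ≤ 1 * 1 := mul_le_mul ih h (norm_nonneg _) zero_le_one
        _ = 1 := one_mul 1

lemma pow_apply_bound (T : K →L[ℂ] K) (h : ‖T‖ ≤ 1) (y : K) (δ : ℝ) (hy : ‖T y - y‖ ≤ δ) :
    ∀ n : ℕ, ‖(T ^ n) y - y‖ ≤ n * δ := by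
  intro n
  induction n with
  | zero => simp
  | succ n ih =>
      have h1 : (T ^ (n+1)) y - y = T ((T ^ n) y - y) + (T y - y) := by
        rw [pow_succ']; simp [ContinuousLinearMap.mul_apply, map_sub]
      calc ‖(T ^ (n+1)) y - y‖ = ‖T ((T ^ n) y - y) + (T y - y)‖ := by rw [h1]
        _ ≤ ‖T ((T ^ n) y - y)‖ + ‖T y - y‖ := norm_add_le _ _
        _ ≤ ‖T‖ * ‖(T ^ n) y - y‖ + δ := by
            gcongr; exact T.le_opNorm _
        _ ≤ 1 * (n * δ) + δ := by
            have hδ : 0 ≤ δ := le_trans (norm_nonneg _) hy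
            gcongr
        _ = ((n:ℝ) + 1) * δ := by ring
        _ = ((n+1 : ℕ) : ℝ) * δ := by push_cast; ring
      -- done
lemma listProd_apply_bound (y : K) : ∀ (l : List (K →L[ℂ] K)), (∀ T ∈ l, ‖T‖ ≤ 1) →
    ‖l.prod y - y‖ ≤ (l.map fun T => ‖T y - y‖).sum := by
  intro l
  induction l with
  | nil => simp
  | cons T l ih =>
      intro h
      have hT : ‖T‖ ≤ 1 := h T List.mem_cons_self
      have h1 : (T :: l).prod y - y = T (l.prod y - y) + (T y - y) := by
        simp [List.prod_cons, ContinuousLinearMap.mul_apply, map_sub]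
      calc ‖(T :: l).prod y - y‖ = ‖T (l.prod y - y) + (T y - y)‖ := by rw [h1]
        _ ≤ ‖T (l.prod y - y)‖ + ‖T y - y‖ := norm_add_le _ _
        _ ≤ ‖l.prod y - y‖ + ‖T y - y‖ := by
            have := T.le_opNorm (l.prod y - y)
            nlinarith [norm_nonneg (l.prod y - y)]
        _ ≤ (l.map fun T => ‖T y - y‖).sum + ‖T y - y‖ := by
            gcongr; exact ih (fun S hS => h S (List.mem_cons_of_mem _ hS))
        _ = ((T :: l).map fun T => ‖T y - y‖).sum := by simp [add_comm]

lemma tuplePow_apply_bound {d : ℕ} (B : Fin d → (K →L[ℂ] K)) (hB : ∀ j, ‖B j‖ ≤ 1)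
    (y : K) (δ : ℝ) (hδ : 0 ≤ δ) (hy : ∀ j, ‖B j y - y‖ ≤ δ) (α : Fin d →₀ ℕ) :
    ‖tuplePow B α y - y‖ ≤ (∑ j, (α j : ℝ)) * δ := by
  have h1 := listProd_apply_bound y (List.ofFn fun j => B j ^ α j) (by
    intro T hT
    rw [List.mem_ofFn] at hT
    obtain ⟨j, rfl⟩ := hT
    exact pow_norm_le_one _ (hB j) _)
  rw [tuplePow]
  refine h1.trans ?_
  rw [List.map_ofFn, List.sum_ofFn, Finset.sum_mul]
  apply Finset.sum_le_sum
  intro j _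
  simpa using pow_apply_bound _ (hB j) y δ (hy j) (α j)


end Aux

section Aux2

variable {H K E : Type*}
    [NormedAddCommGroup H] [InnerProductSpace ℂ H] [CompleteSpace H]
    [NormedAddCommGroup K] [InnerProductSpace ℂ K] [CompleteSpace K]
    [NormedAddCommGroup E] [InnerProductSpace ℂ E] [CompleteSpace E]
    (t : H →ₗ[ℂ] K →ₗ[ℂ] E)

lemma listProd_tensor :
    ∀ (l : List ((H →L[ℂ] H) × (K →L[ℂ] K) × (E →L[ℂ] E))),
    (∀ z ∈ l, ∀ x y, z.2.2 (t x y) = t (z.1 x) (z.2.1 y)) →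
    ∀ x y, (l.map fun z => z.2.2).prod (t x y)
      = t ((l.map fun z => z.1).prod x) ((l.map fun z => z.2.1).prod y) := by
  intro l
  induction l with
  | nil => intro _ x y; simp
  | cons z l ih =>
      intro h x y
      have hz := h z List.mem_cons_self
      have ih' := ih (fun w hw => h w (List.mem_cons_of_mem _ hw))
      simp only [List.map_cons, List.prod_cons, ContinuousLinearMap.mul_apply]
      rw [ih', hz]

lemma pow_tensor (S : H →L[ℂ] H) (T : K →L[ℂ] K) (U : E →L[ℂ] E)
    (h : ∀ x y, U (t x y) = t (S x) (T y)) :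
    ∀ (n : ℕ) (x : H) (y : K), (U ^ n) (t x y) = t ((S ^ n) x) ((T ^ n) y) := by
  intro n
  induction n with
  | zero => intro x y; simp
  | succ n ih =>
      intro x y
      simp only [pow_succ', ContinuousLinearMap.mul_apply]
      rw [ih, h]

lemma tuplePow_tensor {d : ℕ} (A : Fin d → (H →L[ℂ] H)) (B : Fin d → (K →L[ℂ] K))
    (AB : Fin d → (E →L[ℂ] E)) (hAB : ∀ j x y, AB j (t x y) = t (A j x) (B j y))
    (α : Fin d →₀ ℕ) (x : H) (y : K) :
    tuplePow AB α (t x y) = t (tuplePow A α x) (tuplePow B α y) := by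
  have := listProd_tensor t (List.ofFn fun j => (A j ^ α j, B j ^ α j, AB j ^ α j))
    (by
      intro z hz
      rw [List.mem_ofFn] at hz
      obtain ⟨j, rfl⟩ := hz
      exact pow_tensor t _ _ _ (hAB j) (α j)) x y
  simpa [tuplePow, List.map_ofFn, Function.comp_def] using this

lemma tensor_norm (ht_inner : ∀ (x x' : H) (y y' : K),
      (inner ℂ (t x y) (t x' y') : ℂ) = (inner ℂ x x' : ℂ) * (inner ℂ y y' : ℂ))
    (x : H) (y : K) : ‖t x y‖ = ‖x‖ * ‖y‖ := by
  have h1 : (inner ℂ (t x y) (t x y) : ℂ) = (inner ℂ x x : ℂ) * (inner ℂ y y : ℂ) := ht_inner x x y y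
  rw [inner_self_eq_norm_sq_to_K, inner_self_eq_norm_sq_to_K, inner_self_eq_norm_sq_to_K] at h1
  have h3 : (‖t x y‖ : ℝ) ^ 2 = (‖x‖ * ‖y‖) ^ 2 := by
    rw [← RCLike.ofReal_pow, ← RCLike.ofReal_pow, ← RCLike.ofReal_pow, ← RCLike.ofReal_mul,
      RCLike.ofReal_inj] at h1
    rw [h1, mul_pow]
  rw [← Real.sqrt_sq (norm_nonneg (t x y)), h3,
    Real.sqrt_sq (mul_nonneg (norm_nonneg x) (norm_nonneg y))]


end Aux2

section Aux3

variable {K : Type*} [NormedAddCommGroup K] [InnerProductSpace ℂ K] [CompleteSpace K]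

lemma avg_approx {d : ℕ} (hd : 0 < d) (B : Fin d → (K →L[ℂ] K))
    (hBcontr : ∀ j, ‖B j‖ ≤ 1)
    (𝔅 : Subalgebra ℂ (K →L[ℂ] K)) (h𝔅closed : IsClosed (𝔅 : Set (K →L[ℂ] K)))
    (hmem : ∀ j, B j ∈ 𝔅)
    (χ : 𝔅 →ₐ[ℂ] ℂ) (hχ : ∀ j, χ ⟨B j, hmem j⟩ = 1) :
    ∀ η : ℝ, 0 < η → ∃ y : K, ‖y‖ = 1 ∧
      ‖((d:ℂ)⁻¹ • ∑ j, B j) y - y‖ ≤ η := by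
  classical
  haveI : CompleteSpace 𝔅 := h𝔅closed.completeSpace_coe
  have hone : ‖(1 : 𝔅)‖ ≤ 1 := by
    show ‖((1 : 𝔅) : K →L[ℂ] K)‖ ≤ 1
    rw [OneMemClass.coe_one, ContinuousLinearMap.one_def]
    exact ContinuousLinearMap.norm_id_le
  have hchar : ∀ a : 𝔅, ‖χ a‖ ≤ ‖a‖ := by
    intro a
    calc ‖χ a‖ ≤ ‖a‖ * ‖(1 : 𝔅)‖ := AlgHom.norm_apply_le_self_mul_norm_one χ a
      _ ≤ ‖a‖ * 1 := by gcongr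
      _ = ‖a‖ := mul_one _
  -- the average, as an element of 𝔅
  set Cb : 𝔅 := (d:ℂ)⁻¹ • ∑ j, (⟨B j, hmem j⟩ : 𝔅) with hCb
  have hCbcoe : ((Cb : 𝔅) : K →L[ℂ] K) = (d:ℂ)⁻¹ • ∑ j, B j := by
    simp [hCb]
  have hCbnorm : ‖Cb‖ ≤ 1 := by
    show ‖((Cb : 𝔅) : K →L[ℂ] K)‖ ≤ 1
    rw [hCbcoe]
    calc ‖(d:ℂ)⁻¹ • ∑ j, B j‖ = ‖(d:ℂ)⁻¹‖ * ‖∑ j, B j‖ := norm_smul _ _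
      _ ≤ (d:ℝ)⁻¹ * (d * 1) := by
          apply mul_le_mul
          · simp
          · refine (norm_sum_le _ _).trans ?_
            calc ∑ j, ‖B j‖ ≤ ∑ _j : Fin d, (1:ℝ) := Finset.sum_le_sum fun j _ => hBcontr j
              _ = d * 1 := by simp
          · exact norm_nonneg _
          · simp
      _ = 1 := by field_simp
  have hχC : χ Cb = 1 := by
    rw [hCb, map_smul, map_sum]
    simp only [hχ, Finset.sum_const, Finset.card_univ, Fintype.card_fin, nsmul_eq_mul, mul_one]
    rw [smul_eq_mul]
    rw [inv_mul_cancel₀]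
    exact_mod_cast hd.ne'
  intro η hη
  -- set up r
  set r : ℝ := 1 + η/4 with hr
  have hr1 : 1 < r := by rw [hr]; linarith
  have hr0 : 0 < r := by linarith
  have hrinv : r⁻¹ < 1 := inv_lt_one_of_one_lt₀ hr1
  have hrinv0 : 0 < r⁻¹ := by positivity
  -- the element a = r⁻¹ • Cb
  set a : 𝔅 := ((r:ℂ))⁻¹ • Cb with ha
  have hanorm : ‖a‖ < 1 := by
    calc ‖a‖ = ‖((r:ℂ))⁻¹‖ * ‖Cb‖ := norm_smul _ _
      _ ≤ r⁻¹ * 1 := by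
          apply mul_le_mul _ hCbnorm (norm_nonneg _) (le_of_lt hrinv0)
          rw [norm_inv, Complex.norm_real, Real.norm_eq_abs, abs_of_pos hr0]
      _ < 1 := by rw [mul_one]; exact hrinv
  set u : 𝔅ˣ := Units.oneSub a hanorm with hu
  have huval : (u : 𝔅) = 1 - a := rfl
  have hχu : χ (u : 𝔅) = 1 - ((r:ℂ))⁻¹ := by
    rw [huval, map_sub, map_one, ha, map_smul, hχC, smul_eq_mul, mul_one]
  have hχune : χ (u : 𝔅) ≠ 0 := by
    rw [hχu]
    intro hcon
    have h2 : ((r⁻¹ : ℝ) : ℂ) = 1 := by push_cast; linear_combination -hcon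
    have h3 : (r⁻¹ : ℝ) = 1 := by exact_mod_cast h2
    linarith
  have hmulinv : χ (u : 𝔅) * χ ((↑u⁻¹ : 𝔅)) = 1 := by
    rw [← map_mul, Units.mul_inv, map_one]
  have hχuinv : χ ((↑u⁻¹ : 𝔅)) = (1 - ((r:ℂ))⁻¹)⁻¹ := by
    rw [← hχu]
    exact eq_inv_of_mul_eq_one_left ((mul_comm _ _).trans hmulinv)
  have hVnorm : (1 - r⁻¹)⁻¹ ≤ ‖((↑u⁻¹ : 𝔅))‖ := by
    have h1 := hchar ((↑u⁻¹ : 𝔅))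
    rw [hχuinv] at h1
    refine le_trans (le_of_eq ?_) h1
    rw [norm_inv]
    congr 1
    have : ((1:ℂ) - ((r:ℂ))⁻¹) = (((1 - r⁻¹ : ℝ)) : ℂ) := by push_cast; ring
    rw [this, Complex.norm_real, Real.norm_eq_abs, abs_of_nonneg (by linarith)]
  -- extract an approximate eigenvector
  set C : K →L[ℂ] K := (d:ℂ)⁻¹ • ∑ j, B j with hC
  have hCnorm : ‖C‖ ≤ 1 := by rw [← hCbcoe]; exact hCbnorm
  set V : K →L[ℂ] K := ((↑u⁻¹ : 𝔅) : K →L[ℂ] K) with hV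
  have hVnorm2 : (1 - r⁻¹)⁻¹ ≤ ‖V‖ := hVnorm
  have hpos : (0:ℝ) < 1 - r⁻¹ := by linarith
  have hsmall : 1 - r⁻¹ ≤ η/4 := by
    have h7 := mul_inv_cancel₀ hr0.ne'
    nlinarith [hrinv0, hη]
  have hM' : 2/η < ‖V‖ := by
    refine lt_of_lt_of_le ?_ hVnorm2
    have h8 : 1 - r⁻¹ < η/2 := by linarith
    have h9 : (η/2)⁻¹ < (1 - r⁻¹)⁻¹ := by
      exact inv_strictAnti₀ hpos h8
    calc 2/η = (η/2)⁻¹ := by rw [inv_div]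
      _ < (1 - r⁻¹)⁻¹ := h9
  obtain ⟨w, hwlt⟩ : ∃ w : K, 2/η * ‖w‖ < ‖V w‖ := by
    by_contra hcon
    push_neg at hcon
    have : ‖V‖ ≤ 2/η := ContinuousLinearMap.opNorm_le_bound V (by positivity) hcon
    linarith
  have hVwpos : 0 < ‖V w‖ := lt_of_le_of_lt (by positivity) hwlt
  set y : K := ((‖V w‖:ℝ):ℂ)⁻¹ • V w with hy
  have hynorm : ‖y‖ = 1 := by
    rw [hy, norm_smul, norm_inv, Complex.norm_real, Real.norm_eq_abs, abs_of_pos hVwpos,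
      inv_mul_cancel₀ hVwpos.ne']
  -- the inverse identity
  have h5 : ((u:𝔅) * (↑u⁻¹:𝔅)) = 1 := u.mul_inv
  have hval2 : (((u:𝔅)) : K →L[ℂ] K) = (1:K →L[ℂ] K) - ((r:ℝ):ℂ)⁻¹ • C := by
    rw [huval, AddSubgroupClass.coe_sub, OneMemClass.coe_one, ha, SetLike.val_smul, hCbcoe]
  have h5' : ((1:K →L[ℂ] K) - ((r:ℝ):ℂ)⁻¹ • C) * V = 1 := by
    have h5c := congrArg (Subtype.val : 𝔅 → (K →L[ℂ] K)) h5
    rw [MulMemClass.coe_mul, OneMemClass.coe_one, hval2] at h5c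
    exact h5c
  have h6 : y - ((r:ℝ):ℂ)⁻¹ • C y = ((‖V w‖:ℝ):ℂ)⁻¹ • w := by
    have h7 := congrArg (fun (T : K →L[ℂ] K) => T w) h5'
    simp only [ContinuousLinearMap.mul_apply, ContinuousLinearMap.sub_apply,
      ContinuousLinearMap.smul_apply, ContinuousLinearMap.one_apply] at h7
    rw [hy, map_smul]
    rw [smul_comm (((r:ℝ):ℂ))⁻¹ (((‖V w‖:ℝ):ℂ)⁻¹)]
    rw [← smul_sub, h7]
  have h6norm : ‖y - ((r:ℝ):ℂ)⁻¹ • C y‖ ≤ η/2 := by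
    rw [h6, norm_smul, norm_inv, Complex.norm_real, Real.norm_eq_abs,
      abs_of_pos hVwpos]
    have hw0 : 0 ≤ ‖w‖ := norm_nonneg w
    rw [inv_mul_le_iff₀ hVwpos]
    have h9 := mul_le_mul_of_nonneg_left hwlt.le (le_of_lt (by positivity : (0:ℝ) < η/2))
    calc ‖w‖ = (η/2) * (2/η * ‖w‖) := by field_simp
      _ ≤ (η/2) * ‖V w‖ := h9
      _ = ‖V w‖ * (η/2) := mul_comm _ _
  refine ⟨y, hynorm, ?_⟩
  have hid : C y - y = -((y - ((r:ℝ):ℂ)⁻¹ • C y) + ((((r:ℝ))⁻¹ - 1 : ℝ) : ℂ) • C y) := by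
    push_cast
    module
  rw [hid, norm_neg]
  calc ‖(y - ((r:ℝ):ℂ)⁻¹ • C y) + ((((r:ℝ))⁻¹ - 1 : ℝ) : ℂ) • C y‖
      ≤ ‖y - ((r:ℝ):ℂ)⁻¹ • C y‖ + ‖((((r:ℝ))⁻¹ - 1 : ℝ) : ℂ) • C y‖ := norm_add_le _ _
    _ ≤ η/2 + (1 - r⁻¹) * 1 := by
        gcongr
        rw [norm_smul, Complex.norm_real, Real.norm_eq_abs, abs_of_nonpos (by linarith)]
        have hCy : ‖C y‖ ≤ 1 := by
          calc ‖C y‖ ≤ ‖C‖ * ‖y‖ := C.le_opNorm y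
            _ ≤ 1 * 1 := by rw [hynorm]; exact mul_le_mul_of_nonneg_right hCnorm zero_le_one
            _ = 1 := one_mul 1
        have h10 := mul_le_mul_of_nonneg_left hCy (show (0:ℝ) ≤ 1 - r⁻¹ by linarith)
        nlinarith [h10]
    _ ≤ η := by rw [mul_one]; linarith


lemma exists_unit_of_char (𝔅 : Subalgebra ℂ (K →L[ℂ] K)) (χ : 𝔅 →ₐ[ℂ] ℂ) :
    ∃ y : K, ‖y‖ = 1 := by
  have h1 : (1:𝔅) ≠ 0 := by
    intro h
    have h2 := congrArg χ h
    rw [map_one, map_zero] at h2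
    exact one_ne_zero h2
  have h2 : ((1:𝔅) : K →L[ℂ] K) ≠ 0 := by
    intro h
    exact h1 (Subtype.ext (by rw [OneMemClass.coe_one] at h; rw [OneMemClass.coe_one,
      ZeroMemClass.coe_zero, h]))
  have h3 : ∃ v : K, v ≠ 0 := by
    by_contra hc
    push_neg at hc
    apply h2
    ext v
    rw [OneMemClass.coe_one]
    simp [hc v]
  obtain ⟨v, hv⟩ := h3
  have hvn : 0 < ‖v‖ := norm_pos_iff.mpr hv
  refine ⟨((‖v‖:ℝ):ℂ)⁻¹ • v, ?_⟩
  rw [norm_smul, norm_inv, Complex.norm_real, Real.norm_eq_abs, abs_of_pos hvn,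
    inv_mul_cancel₀ hvn.ne']

theorem joint_approx {d : ℕ} (B : Fin d → (K →L[ℂ] K))
    (hBcontr : ∀ j, ‖B j‖ ≤ 1)
    (𝔅 : Subalgebra ℂ (K →L[ℂ] K)) (h𝔅closed : IsClosed (𝔅 : Set (K →L[ℂ] K)))
    (hmem : ∀ j, B j ∈ 𝔅)
    (χ : 𝔅 →ₐ[ℂ] ℂ) (hχ : ∀ j, χ ⟨B j, hmem j⟩ = 1) :
    ∀ δ : ℝ, 0 < δ → ∃ y : K, ‖y‖ = 1 ∧ ∀ j, ‖B j y - y‖ ≤ δ := by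
  intro δ hδ
  rcases Nat.eq_zero_or_pos d with hd | hd
  · obtain ⟨y, hy⟩ := exists_unit_of_char 𝔅 χ
    subst hd
    exact ⟨y, hy, fun j => j.elim0⟩
  · set η : ℝ := δ^2 / (2*d) with hη
    have hηpos : 0 < η := by positivity
    obtain ⟨y, hynorm, hCy⟩ := avg_approx hd B hBcontr 𝔅 h𝔅closed hmem χ hχ η hηpos
    refine ⟨y, hynorm, ?_⟩
    intro j
    set f : Fin d → ℝ := fun i => (inner ℂ (B i y) y : ℂ).re with hf
    -- each f i ≤ 1
    have hfle : ∀ i, f i ≤ 1 := by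
      intro i
      calc f i ≤ ‖(inner ℂ (B i y) y : ℂ)‖ := Complex.re_le_norm _
        _ = ‖(inner ℂ (B i y) y : ℂ)‖ := rfl
        _ ≤ ‖B i y‖ * ‖y‖ := norm_inner_le_norm _ _
        _ ≤ 1 * 1 := by
            rw [hynorm]
            have := (B i).le_opNorm y
            rw [hynorm, mul_one] at this
            exact mul_le_mul_of_nonneg_right (this.trans (hBcontr i)) zero_le_one
        _ = 1 := one_mul 1
    -- the averaged inner product is large
    have hre : 1 - η ≤ ((d:ℝ)⁻¹) * ∑ i, f i := by
      have e1 : (inner ℂ ((((d:ℂ)⁻¹ • ∑ i, B i) y) - y) y : ℂ).re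
          = (d:ℝ)⁻¹ * (∑ i, f i) - 1 := by
        rw [inner_sub_left]
        have e2 : (((d:ℂ)⁻¹ • ∑ i, B i) y) = (d:ℂ)⁻¹ • ∑ i, (B i y) := by
          simp [ContinuousLinearMap.smul_apply, ContinuousLinearMap.sum_apply]
        rw [e2, inner_smul_left, sum_inner]
        have e3 : (starRingEnd ℂ) ((d:ℂ)⁻¹) = ((((d:ℝ))⁻¹ : ℝ) : ℂ) := by
          rw [map_inv₀]
          push_cast
          simp
        rw [e3, Complex.sub_re, Complex.re_ofReal_mul]
        have e4 : (inner ℂ y y : ℂ).re = 1 := by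
          rw [inner_self_eq_norm_sq_to_K (𝕜 := ℂ), hynorm]
          norm_num
        rw [e4, hf]
        simp [Complex.re_sum]
      have e5 : |(inner ℂ ((((d:ℂ)⁻¹ • ∑ i, B i) y) - y) y : ℂ).re| ≤ η := by
        calc |(inner ℂ ((((d:ℂ)⁻¹ • ∑ i, B i) y) - y) y : ℂ).re|
            ≤ ‖(inner ℂ ((((d:ℂ)⁻¹ • ∑ i, B i) y) - y) y : ℂ)‖ := Complex.abs_re_le_norm _
          _ = ‖(inner ℂ ((((d:ℂ)⁻¹ • ∑ i, B i) y) - y) y : ℂ)‖ := rfl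
          _ ≤ ‖(((d:ℂ)⁻¹ • ∑ i, B i) y) - y‖ * ‖y‖ := norm_inner_le_norm _ _
          _ ≤ η * 1 := by rw [hynorm]; exact mul_le_mul_of_nonneg_right hCy zero_le_one
          _ = η := mul_one η
      have e6 := (abs_le.mp e5).1
      rw [e1] at e6
      linarith
    -- f j is large
    have hdpos : (0:ℝ) < d := by exact_mod_cast hd
    have hsum : (d:ℝ) * (1 - η) ≤ ∑ i, f i := by
      have := mul_le_mul_of_nonneg_left hre (le_of_lt hdpos)
      rw [← mul_assoc, mul_inv_cancel₀ hdpos.ne', one_mul] at this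
      linarith
    have hsplit : ∑ i, f i = f j + ∑ i ∈ Finset.univ.erase j, f i :=
      (Finset.add_sum_erase _ f (Finset.mem_univ j)).symm
    have herase : ∑ i ∈ Finset.univ.erase j, f i ≤ (d:ℝ) - 1 := by
      have h7 := Finset.sum_le_card_nsmul (Finset.univ.erase j) f 1
        (fun i _ => hfle i)
      rw [Finset.card_erase_of_mem (Finset.mem_univ j), Finset.card_univ, Fintype.card_fin]
        at h7
      have h8 : ((d - 1 : ℕ) : ℝ) = (d:ℝ) - 1 := by
        have : (1:ℕ) ≤ d := hd
        push_cast [Nat.cast_sub this]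
        ring
      calc ∑ i ∈ Finset.univ.erase j, f i ≤ (d-1 : ℕ) • (1:ℝ) := h7
        _ = ((d-1:ℕ) : ℝ) := by rw [nsmul_eq_mul, mul_one]
        _ = (d:ℝ) - 1 := h8
    have hfj : 1 - (d:ℝ) * η ≤ f j := by nlinarith
    -- conclude
    have hn2 : ‖B j y - y‖^2 ≤ δ^2 := by
      have h9 := norm_sub_sq (𝕜 := ℂ) (B j y) y
      have h10 : RCLike.re (inner ℂ (B j y) y : ℂ) = f j := rfl
      rw [h10, hynorm] at h9
      have h11 : ‖B j y‖ ≤ 1 := by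
        have := (B j).le_opNorm y
        rw [hynorm, mul_one] at this
        exact this.trans (hBcontr j)
      have h12 : (d:ℝ) * η = δ^2/2 := by
        rw [hη]
        field_simp
      nlinarith [norm_nonneg (B j y)]
    calc ‖B j y - y‖ = Real.sqrt (‖B j y - y‖^2) := (Real.sqrt_sq (norm_nonneg _)).symm
      _ ≤ Real.sqrt (δ^2) := Real.sqrt_le_sqrt hn2
      _ = δ := Real.sqrt_sq hδ.le


end Aux3


/-- Let `B` be a commuting `d`-tuple of contractions on a Hilbert space `K`
admitting a unital multiplicative linear functional `χ` on the unital Banach algebra generated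
by `B_1, …, B_d` with `χ(B_j) = 1` for all `j`. Then for any commuting `d`-tuple `A` of bounded
operators on a Hilbert space `H` and any polynomial `p` in `d` variables,
`‖p(A ⊗ B)‖ ≥ ‖p(A)‖`, where `A ⊗ B = (A_1 ⊗ B_1, …, A_d ⊗ B_d)` acts on the Hilbert space
tensor product `H ⊗ K` (axiomatized here by a bilinear map `t` with
`⟪t x y, t x' y'⟫ = ⟪x,x'⟫⟪y,y'⟫`, total elementary tensors, and
`(A_j ⊗ B_j)(t x y) = t (A_j x) (B_j y)`). -/
theorem tensor_polyEval_norm_ge {d : ℕ} {H K E : Type*}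
    [NormedAddCommGroup H] [InnerProductSpace ℂ H] [CompleteSpace H]
    [NormedAddCommGroup K] [InnerProductSpace ℂ K] [CompleteSpace K]
    [NormedAddCommGroup E] [InnerProductSpace ℂ E] [CompleteSpace E]
    (A : Fin d → (H →L[ℂ] H)) (B : Fin d → (K →L[ℂ] K))
    (hAcomm : ∀ i j, Commute (A i) (A j)) (hBcomm : ∀ i j, Commute (B i) (B j))
    (hBcontr : ∀ j, ‖B j‖ ≤ 1)
    (χ : ((Algebra.adjoin ℂ (Set.range B)).topologicalClosure) →ₐ[ℂ] ℂ)
    (hχ : ∀ j (hj : B j ∈ (Algebra.adjoin ℂ (Set.range B)).topologicalClosure),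
      χ ⟨B j, hj⟩ = 1)
    (t : H →ₗ[ℂ] K →ₗ[ℂ] E)
    (ht_inner : ∀ (x x' : H) (y y' : K),
      (inner ℂ (t x y) (t x' y') : ℂ) = (inner ℂ x x' : ℂ) * (inner ℂ y y' : ℂ))
    (ht_dense : (Submodule.span ℂ {e : E | ∃ x y, e = t x y}).topologicalClosure = ⊤)
    (AB : Fin d → (E →L[ℂ] E))
    (hAB : ∀ j x y, AB j (t x y) = t (A j x) (B j y))
    :
    ∀ p : MvPolynomial (Fin d) ℂ, ‖polyEval A p‖ ≤ ‖polyEval AB p‖ := by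
  classical
  intro p
  have hmem : ∀ j, B j ∈ (Algebra.adjoin ℂ (Set.range B)).topologicalClosure := fun j =>
    (Algebra.adjoin ℂ (Set.range B)).le_topologicalClosure (Algebra.subset_adjoin ⟨j, rfl⟩)
  have happrox : ∀ δ : ℝ, 0 < δ → ∃ y : K, ‖y‖ = 1 ∧ ∀ j, ‖B j y - y‖ ≤ δ :=
    joint_approx B hBcontr _ (Subalgebra.isClosed_topologicalClosure _) hmem χ
      (fun j => hχ j (hmem j))
  -- the key estimate for unit vectors
  have key : ∀ x : H, ‖x‖ = 1 → ‖polyEval A p x‖ ≤ ‖polyEval AB p‖ := by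
    intro x hx
    refine le_of_forall_pos_le_add ?_
    intro ε hε
    set Cx : ℝ := ∑ α ∈ p.support,
      ‖MvPolynomial.coeff α p‖ * ‖tuplePow A α x‖ * (∑ j, (α j : ℝ)) with hCxdef
    have hCx0 : 0 ≤ Cx := Finset.sum_nonneg (by intro α _; positivity)
    set δ : ℝ := ε / (Cx + 1) with hδdef
    have hδ : 0 < δ := by positivity
    obtain ⟨y, hy1, hyB⟩ := happrox δ hδ
    have hEab : polyEval AB p (t x y) = ∑ α ∈ p.support,
        MvPolynomial.coeff α p • t (tuplePow A α x) (tuplePow B α y) := by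
      rw [polyEval_eq]
      rw [ContinuousLinearMap.sum_apply]
      refine Finset.sum_congr rfl fun α _ => ?_
      rw [ContinuousLinearMap.smul_apply, tuplePow_tensor t A B AB hAB]
    have hEa : t (polyEval A p x) y = ∑ α ∈ p.support,
        MvPolynomial.coeff α p • t (tuplePow A α x) y := by
      rw [polyEval_eq, ContinuousLinearMap.sum_apply]
      simp only [ContinuousLinearMap.smul_apply]
      rw [map_sum t]
      rw [LinearMap.sum_apply]
      refine Finset.sum_congr rfl fun α _ => ?_
      rw [map_smul t, LinearMap.smul_apply]
    have hdiff : ‖t (polyEval A p x) y - polyEval AB p (t x y)‖ ≤ Cx * δ := by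
      rw [hEa, hEab, ← Finset.sum_sub_distrib]
      refine (norm_sum_le _ _).trans ?_
      rw [hCxdef, Finset.sum_mul]
      refine Finset.sum_le_sum fun α _ => ?_
      rw [← smul_sub]
      rw [norm_smul]
      have h1 : t (tuplePow A α x) y - t (tuplePow A α x) (tuplePow B α y)
          = t (tuplePow A α x) (y - tuplePow B α y) := by
        rw [map_sub]
      rw [h1, tensor_norm t ht_inner]
      have h2 : ‖y - tuplePow B α y‖ ≤ (∑ j, (α j : ℝ)) * δ := by
        rw [norm_sub_rev]
        exact tuplePow_apply_bound B hBcontr y δ hδ.le hyB α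
      calc ‖MvPolynomial.coeff α p‖ * (‖tuplePow A α x‖ * ‖y - tuplePow B α y‖)
          ≤ ‖MvPolynomial.coeff α p‖ * (‖tuplePow A α x‖ * ((∑ j, (α j : ℝ)) * δ)) := by
            gcongr
        _ = ‖MvPolynomial.coeff α p‖ * ‖tuplePow A α x‖ * (∑ j, (α j : ℝ)) * δ := by ring
    have hCδ : Cx * δ ≤ ε := by
      have h1 : (0:ℝ) < Cx + 1 := by linarith
      have h2 : Cx * (Cx + 1)⁻¹ ≤ 1 := by
        rw [mul_inv_le_iff₀ h1, one_mul]; linarith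
      rw [hδdef, div_eq_mul_inv]
      calc Cx * (ε * (Cx+1)⁻¹) = ε * (Cx * (Cx+1)⁻¹) := by ring
        _ ≤ ε * 1 := mul_le_mul_of_nonneg_left h2 hε.le
        _ = ε := mul_one ε
    calc ‖polyEval A p x‖ = ‖polyEval A p x‖ * ‖y‖ := by rw [hy1, mul_one]
      _ = ‖t (polyEval A p x) y‖ := (tensor_norm t ht_inner _ _).symm
      _ = ‖polyEval AB p (t x y) + (t (polyEval A p x) y - polyEval AB p (t x y))‖ := by
          congr 1; abel
      _ ≤ ‖polyEval AB p (t x y)‖ + ‖t (polyEval A p x) y - polyEval AB p (t x y)‖ :=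
          norm_add_le _ _
      _ ≤ ‖polyEval AB p‖ * ‖t x y‖ + Cx * δ := by
          gcongr
          exact (polyEval AB p).le_opNorm _
      _ ≤ ‖polyEval AB p‖ * 1 + ε := by
          rw [tensor_norm t ht_inner, hx, hy1, mul_one]
          gcongr
      _ = ‖polyEval AB p‖ + ε := by rw [mul_one]
  -- conclude by homogeneity
  refine ContinuousLinearMap.opNorm_le_bound _ (norm_nonneg _) ?_
  intro x
  rcases eq_or_ne x 0 with rfl | hx0
  · simp
  · have hxn : 0 < ‖x‖ := norm_pos_iff.mpr hx0
    set x' : H := ((‖x‖:ℝ):ℂ)⁻¹ • x with hx'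
    have hx'1 : ‖x'‖ = 1 := by
      rw [hx', norm_smul, norm_inv, Complex.norm_real, Real.norm_eq_abs, abs_of_pos hxn,
        inv_mul_cancel₀ hxn.ne']
    have hxx : x = ((‖x‖:ℝ):ℂ) • x' := by
      rw [hx', smul_smul, mul_inv_cancel₀ (by exact_mod_cast hxn.ne'), one_smul]
    calc ‖polyEval A p x‖ = ‖polyEval A p (((‖x‖:ℝ):ℂ) • x')‖ := by rw [← hxx]
      _ = ‖((‖x‖:ℝ):ℂ)‖ * ‖polyEval A p x'‖ := by rw [map_smul, norm_smul]
      _ = ‖x‖ * ‖polyEval A p x'‖ := by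
          rw [Complex.norm_real, Real.norm_eq_abs, abs_of_pos hxn]
      _ ≤ ‖x‖ * ‖polyEval AB p‖ := by
          exact mul_le_mul_of_nonneg_left (key x' hx'1) hxn.le
      _ = ‖polyEval AB p‖ * ‖x‖ := mul_comm _ _
end
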